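/- Let G be a finite simple graph, let u be a vertex, and choose a linear order of V(G) uniformly at random. The probability that for no neighbor v of u is u the rightmost vertex of the closed neighborhood N[v] in the order, equals ∑_{i=0}^{d(u)} (−1)^i · ∑_{I ⊆ N(u), |I| = i} |{u} ∪ ⋃_{v∈I} N[v]|^{−1}. -/

import Mathlib

open Finset

lemma count_max {V : Type*} [Fintype V] [DecidableEq V] (u : V) (S : Finset V) (hu : u ∈ S) :
    S.card * (univ.filter (fun σ : V ≃ Fin (Fintype.card V) =>
      ∀ x ∈ S, σ x ≤ σ u)).card = Fintype.card (V ≃ Fin (Fintype.card V)) := by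
  classical
  set n := Fintype.card V
  have hcover : (univ : Finset (V ≃ Fin n)) =
      S.biUnion (fun w => univ.filter (fun σ => ∀ x ∈ S, σ x ≤ σ w)) := by
    ext σ
    simp only [mem_univ, true_iff, mem_biUnion, mem_filter]
    obtain ⟨w, hw, hmax⟩ := S.exists_max_image (fun x => σ x) ⟨u, hu⟩
    exact ⟨w, hw, trivial, fun x hx => hmax x hx⟩
  have hdisj : ∀ w₁ ∈ S, ∀ w₂ ∈ S, w₁ ≠ w₂ →
      Disjoint (univ.filter (fun σ : V ≃ Fin n => ∀ x ∈ S, σ x ≤ σ w₁))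
        (univ.filter (fun σ => ∀ x ∈ S, σ x ≤ σ w₂)) := by
    intro w₁ h₁ w₂ h₂ hne
    rw [disjoint_left]
    intro σ hσ1 hσ2
    simp only [mem_filter] at hσ1 hσ2
    have h12 := hσ1.2 w₂ h₂
    have h21 := hσ2.2 w₁ h₁
    exact hne (σ.injective (le_antisymm h21 h12))
  have hcard : ∀ w ∈ S, (univ.filter (fun σ : V ≃ Fin n => ∀ x ∈ S, σ x ≤ σ w)).card =
      (univ.filter (fun σ : V ≃ Fin n => ∀ x ∈ S, σ x ≤ σ u)).card := by
    intro w hw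
    apply card_nbij' (fun σ => (Equiv.swap u w).trans σ) (fun σ => (Equiv.swap u w).trans σ)
    · intro σ hσ
      simp only [mem_coe, mem_filter, mem_univ, true_and] at hσ ⊢
      intro x hx
      have hx' : Equiv.swap u w x ∈ S := by
        rcases eq_or_ne x u with rfl | hxu
        · simpa [Equiv.swap_apply_left] using hw
        rcases eq_or_ne x w with rfl | hxw
        · simpa [Equiv.swap_apply_right] using hu
        · simpa [Equiv.swap_apply_of_ne_of_ne hxu hxw] using hx
      simpa [Equiv.swap_apply_left] using hσ _ hx'
    · intro σ hσ
      simp only [mem_coe, mem_filter, mem_univ, true_and] at hσ ⊢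
      intro x hx
      have hx' : Equiv.swap u w x ∈ S := by
        rcases eq_or_ne x u with rfl | hxu
        · simpa [Equiv.swap_apply_left] using hw
        rcases eq_or_ne x w with rfl | hxw
        · simpa [Equiv.swap_apply_right] using hu
        · simpa [Equiv.swap_apply_of_ne_of_ne hxu hxw] using hx
      simpa [Equiv.swap_apply_right] using hσ _ hx'
    · intro σ _
      ext x; simp [Equiv.trans_apply]
    · intro σ _
      ext x; simp [Equiv.trans_apply]
  calc S.card * (univ.filter (fun σ : V ≃ Fin n => ∀ x ∈ S, σ x ≤ σ u)).card
      = ∑ w ∈ S, (univ.filter (fun σ : V ≃ Fin n => ∀ x ∈ S, σ x ≤ σ w)).card := by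
        rw [Finset.sum_congr rfl hcard, Finset.sum_const, smul_eq_mul]
    _ = Fintype.card (V ≃ Fin n) := by
        rw [← Finset.card_biUnion hdisj, ← hcover, Finset.card_univ]

theorem stmt7 {V : Type*} [Fintype V] [DecidableEq V] (G : SimpleGraph V)
    [DecidableRel G.Adj] (u : V) :
    (Nat.card {σ : V ≃ Fin (Fintype.card V) //
        ∀ v ∈ G.neighborFinset u,
          ¬ ∀ x ∈ insert v (G.neighborFinset v), σ x ≤ σ u} : ℝ) /
      (Nat.card (V ≃ Fin (Fintype.card V)) : ℝ) =
    ∑ i ∈ Finset.range (G.degree u + 1), (-1 : ℝ) ^ i *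
      ∑ I ∈ (G.neighborFinset u).powersetCard i,
        ((insert u (I.biUnion fun v => insert v (G.neighborFinset v))).card : ℝ)⁻¹ := by
  classical
  set n := Fintype.card V with hn
  have hne : Nonempty (V ≃ Fin n) := ⟨Fintype.equivFin V⟩
  have hNpos : (0:ℝ) < (Nat.card (V ≃ Fin n) : ℝ) := by
    rw [Nat.card_eq_fintype_card]
    exact_mod_cast Fintype.card_pos
  have key : ∀ I : Finset V,
      ((univ.filter (fun σ : V ≃ Fin n => ∀ v ∈ I,
          ∀ x ∈ insert v (G.neighborFinset v), σ x ≤ σ u)).card : ℝ)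
      = (Nat.card (V ≃ Fin n) : ℝ) *
        ((insert u (I.biUnion fun v => insert v (G.neighborFinset v))).card : ℝ)⁻¹ := by
    intro I
    set S := insert u (I.biUnion fun v => insert v (G.neighborFinset v)) with hS
    have huS : u ∈ S := mem_insert_self _ _
    have hfilter : (univ.filter (fun σ : V ≃ Fin n => ∀ v ∈ I,
          ∀ x ∈ insert v (G.neighborFinset v), σ x ≤ σ u))
        = univ.filter (fun σ => ∀ x ∈ S, σ x ≤ σ u) := by
      apply filter_congr; intro σ _
      constructor
      · intro h x hx
        rcases mem_insert.mp hx with rfl | hx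
        · exact le_refl _
        · obtain ⟨v, hv, hxv⟩ := mem_biUnion.mp hx; exact h v hv x hxv
      · intro h v hv x hx
        exact h x (mem_insert.mpr (Or.inr (mem_biUnion.mpr ⟨v, hv, hx⟩)))
    have hc' : (S.card : ℝ) * ((univ.filter (fun σ : V ≃ Fin n =>
        ∀ x ∈ S, σ x ≤ σ u)).card : ℝ) = (Nat.card (V ≃ Fin n) : ℝ) := by
      rw [Nat.card_eq_fintype_card]; exact_mod_cast count_max u S huS
    have hSpos : (0:ℝ) < (S.card : ℝ) := by
      exact_mod_cast card_pos.mpr ⟨u, huS⟩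
    rw [hfilter, eq_mul_inv_iff_mul_eq₀ (ne_of_gt hSpos)]
    linarith [hc']
  have hnum : (Nat.card {σ : V ≃ Fin n //
        ∀ v ∈ G.neighborFinset u,
          ¬ ∀ x ∈ insert v (G.neighborFinset v), σ x ≤ σ u} : ℝ)
      = ∑ I ∈ (G.neighborFinset u).powerset, (-1:ℝ)^I.card *
          ((univ.filter (fun σ : V ≃ Fin n => ∀ v ∈ I,
            ∀ x ∈ insert v (G.neighborFinset v), σ x ≤ σ u)).card : ℝ) := by
    rw [Nat.card_eq_fintype_card, Fintype.card_subtype]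
    rw [← Finset.sum_boole]
    have step : ∀ σ : V ≃ Fin n,
        (if (∀ v ∈ G.neighborFinset u,
            ¬ ∀ x ∈ insert v (G.neighborFinset v), σ x ≤ σ u) then (1:ℝ) else 0)
        = ∑ I ∈ (G.neighborFinset u).powerset, (-1:ℝ)^I.card *
            (if (∀ v ∈ I, ∀ x ∈ insert v (G.neighborFinset v), σ x ≤ σ u)
              then (1:ℝ) else 0) := by
      intro σ
      have lhs_eq : (if (∀ v ∈ G.neighborFinset u,
            ¬ ∀ x ∈ insert v (G.neighborFinset v), σ x ≤ σ u) then (1:ℝ) else 0)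
          = ∏ v ∈ G.neighborFinset u,
              ((-(if (∀ x ∈ insert v (G.neighborFinset v), σ x ≤ σ u) then (1:ℝ) else 0)) + 1) := by
        split_ifs with h
        · rw [eq_comm, Finset.prod_eq_one]
          intro v hv
          rw [if_neg (h v hv)]; ring
        · push_neg at h
          obtain ⟨v, hv, hE⟩ := h
          rw [eq_comm]
          apply Finset.prod_eq_zero hv
          rw [if_pos hE]; ring
      rw [lhs_eq, Finset.prod_add]
      apply Finset.sum_congr rfl
      intro I hI
      rw [Finset.prod_const_one, mul_one]
      by_cases h : ∀ v ∈ I, ∀ x ∈ insert v (G.neighborFinset v), σ x ≤ σ u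
      · rw [Finset.prod_congr rfl (fun v hv => by rw [if_pos (h v hv)] :
          ∀ v ∈ I, (-(if (∀ x ∈ insert v (G.neighborFinset v), σ x ≤ σ u) then (1:ℝ) else 0))
            = -1), Finset.prod_const, if_pos h, mul_one]
      · rw [if_neg h, mul_zero]
        push_neg at h
        obtain ⟨v, hv, hE⟩ := h
        have hE' : ¬ ∀ x ∈ insert v (G.neighborFinset v), σ x ≤ σ u := by
          push_neg; exact hE
        rw [Finset.prod_eq_zero hv (by rw [if_neg hE']; ring)]
    rw [Finset.sum_congr rfl (fun σ _ => step σ), Finset.sum_comm]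
    apply Finset.sum_congr rfl
    intro I hI
    rw [← Finset.mul_sum, Finset.sum_boole]
  rw [hnum, Finset.sum_div]
  have step2 : ∀ I ∈ (G.neighborFinset u).powerset,
      ((-1:ℝ)^I.card * ((univ.filter (fun σ : V ≃ Fin n => ∀ v ∈ I,
          ∀ x ∈ insert v (G.neighborFinset v), σ x ≤ σ u)).card : ℝ)) /
        (Nat.card (V ≃ Fin n) : ℝ)
      = (-1:ℝ)^I.card *
          ((insert u (I.biUnion fun v => insert v (G.neighborFinset v))).card : ℝ)⁻¹ := by
    intro I _
    rw [key I]
    field_simp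
  rw [Finset.sum_congr rfl step2, Finset.sum_powerset]
  rw [SimpleGraph.card_neighborFinset_eq_degree]
  apply Finset.sum_congr rfl
  intro i _
  rw [Finset.mul_sum]
  apply Finset.sum_congr rfl
  intro I hI
  rw [(Finset.mem_powersetCard.mp hI).2]
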